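/- For a positive semidefinite operator C on a finite-dimensional complex Hilbert space, the range of C equals the set of vectors x such that there exists α > 0 with C − α·(outer product of x with itself) positive semidefinite. -/

import Mathlib

open ComplexOrder Matrix
open scoped MatrixOrder

variable {n : ℕ}

local notation "E" => EuclideanSpace ℂ (Fin n)

lemma inner_piLp_equiv_symm' (x y : Fin n → ℂ) :
    inner ℂ ((WithLp.equiv 2 (Fin n → ℂ)).symm x) ((WithLp.equiv 2 (Fin n → ℂ)).symm y)
      = star x ⬝ᵥ y :=
  dotProduct_comm _ _

lemma herm_shift {S : Matrix (Fin n) (Fin n) ℂ} (hS : S.IsHermitian) (y w : Fin n → ℂ) :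
    star y ⬝ᵥ (S *ᵥ w) = star (S *ᵥ y) ⬝ᵥ w := by
  rw [Matrix.dotProduct_mulVec, Matrix.star_mulVec, hS.eq]

lemma outer_quad (x y : Fin n → ℂ) :
    star y ⬝ᵥ (Matrix.vecMulVec x (star x)) *ᵥ y = (star y ⬝ᵥ x) * (star x ⬝ᵥ y) := by
  simp only [dotProduct, Matrix.mulVec, Matrix.vecMulVec_apply, Pi.star_apply,
    Finset.mul_sum, Finset.sum_mul]
  rw [Finset.sum_comm]
  refine Finset.sum_congr rfl fun j _ => Finset.sum_congr rfl fun i _ => by ring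

lemma expand_quad (C : Matrix (Fin n) (Fin n) ℂ) (α : ℂ) (x y : Fin n → ℂ) :
    star y ⬝ᵥ (C - α • Matrix.vecMulVec x (star x)) *ᵥ y
      = star y ⬝ᵥ C *ᵥ y - α * ((star y ⬝ᵥ x) * (star x ⬝ᵥ y)) := by
  rw [Matrix.sub_mulVec, dotProduct_sub, Matrix.smul_mulVec,
    dotProduct_smul, smul_eq_mul, outer_quad]

lemma outer_herm (x : Fin n → ℂ) (α : ℝ) :
    ((α : ℂ) • Matrix.vecMulVec x (star x)).IsHermitian := by
  ext i j
  simp [Matrix.conjTranspose_apply, Matrix.vecMulVec_apply, mul_comm, mul_left_comm, mul_assoc]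

theorem stmt_1 {n : ℕ} (C : Matrix (Fin n) (Fin n) ℂ) (hC : C.PosSemidef) :
    (LinearMap.range (Matrix.toLin' C) : Set (Fin n → ℂ)) =
      {x : Fin n → ℂ | ∃ α : ℝ, 0 < α ∧
        (C - (α : ℂ) • Matrix.vecMulVec x (star x)).PosSemidef} := by
  set S := CFC.sqrt C with hSdef
  have hS : S.PosSemidef := nonneg_iff_posSemidef.mp (CFC.sqrt_nonneg C)
  have hmul : S * S = C := CFC.sqrt_mul_sqrt_self C (nonneg_iff_posSemidef.mpr hC)
  have hSh : S.IsHermitian := hS.1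
  set e := (WithLp.equiv 2 (Fin n → ℂ)).symm with he
  ext x
  simp only [SetLike.mem_coe, LinearMap.mem_range, Set.mem_setOf_eq, Matrix.toLin'_apply]
  constructor
  · rintro ⟨u, rfl⟩
    set v := S *ᵥ u with hv
    have hx : C *ᵥ u = S *ᵥ v := by rw [← hmul, ← Matrix.mulVec_mulVec]
    by_cases hv0 : v = 0
    · refine ⟨1, one_pos, ?_⟩
      have h0 : C *ᵥ u = 0 := by rw [hx, hv0, Matrix.mulVec_zero]
      rw [h0]
      have hzero : C - (((1:ℝ)):ℂ) • Matrix.vecMulVec (0 : Fin n → ℂ) (star (0 : Fin n → ℂ)) = C := by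
        ext i j; simp [Matrix.vecMulVec_apply]
      rw [hzero]; exact hC
    · have hvn : (0:ℝ) < ‖e v‖ := by
        rw [norm_pos_iff]
        simpa [he] using hv0
      refine ⟨(‖e v‖ ^ 2)⁻¹, by positivity, ?_⟩
      refine PosSemidef.of_dotProduct_mulVec_nonneg (hC.1.sub (outer_herm _ _)) fun y => ?_
      rw [expand_quad]
      have h1 : star y ⬝ᵥ C *ᵥ y = inner ℂ (e (S *ᵥ y)) (e (S *ᵥ y)) := by
        rw [← hmul, ← Matrix.mulVec_mulVec, herm_shift hSh,
          inner_piLp_equiv_symm']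
      have h2 : star y ⬝ᵥ (C *ᵥ u) = inner ℂ (e (S *ᵥ y)) (e v) := by
        rw [hx, herm_shift hSh, inner_piLp_equiv_symm']
      have h3 : star (C *ᵥ u) ⬝ᵥ y = inner ℂ (e v) (e (S *ᵥ y)) := by
        rw [hx, ← herm_shift hSh, inner_piLp_equiv_symm']
      rw [h1, h2, h3]
      set w := e (S *ᵥ y) with hw
      set c : ℂ := inner ℂ (e v) w with hc
      have hcs := inner_mul_inner_self_le (𝕜 := ℂ) (e v) w
      rw [norm_inner_symm w (e v)] at hcs
      have hww : (inner ℂ w w : ℂ) = (‖w‖ : ℂ) ^ 2 := inner_self_eq_norm_sq_to_K w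
      have hwc : (inner ℂ w (e v) : ℂ) = starRingEnd ℂ c := (inner_conj_symm _ _).symm
      have hre : RCLike.re (inner ℂ (e v) (e v) : ℂ) = ‖e v‖ ^ 2 := inner_self_eq_norm_sq (e v)
      have hre2 : RCLike.re (inner ℂ w w : ℂ) = ‖w‖ ^ 2 := inner_self_eq_norm_sq w
      rw [hww, hwc]
      have hcc : starRingEnd ℂ c * c = ((‖c‖ : ℂ)) ^ 2 := by
        rw [mul_comm]; exact RCLike.mul_conj c
      rw [hcc]
      have key : (0:ℝ) ≤ ‖w‖ ^ 2 - (‖e v‖ ^ 2)⁻¹ * ‖c‖ ^ 2 := by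
        rw [hre, hre2] at hcs
        have h4 : ‖c‖ * ‖c‖ ≤ ‖e v‖ ^ 2 * ‖w‖ ^ 2 := hcs
        rw [sub_nonneg, inv_mul_le_iff₀ (by positivity)]
        nlinarith
      calc (0:ℂ) = ((0:ℝ) : ℂ) := by norm_num
        _ ≤ (((‖w‖ ^ 2 - (‖e v‖ ^ 2)⁻¹ * ‖c‖ ^ 2 : ℝ)) : ℂ) := by
            exact_mod_cast Complex.zero_le_real.mpr key
        _ = (‖w‖ : ℂ) ^ 2 - ((((‖e v‖ ^ 2)⁻¹ : ℝ)) : ℂ) * (‖c‖ : ℂ) ^ 2 := by push_cast; ring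
  · rintro ⟨α, hα, hD⟩
    set T : EuclideanSpace ℂ (Fin n) →ₗ[ℂ] EuclideanSpace ℂ (Fin n) :=
      Matrix.toEuclideanLin S with hT
    set K := LinearMap.ker T with hK
    obtain ⟨q, hq, p, hp, hxpq⟩ := K.exists_add_mem_mem_orthogonal (e x)
    have hq0 : S *ᵥ (WithLp.equiv 2 (Fin n → ℂ) q) = 0 := by
      have := hq
      rw [LinearMap.mem_ker, hT, Matrix.toEuclideanLin_apply] at this
      simpa using congrArg (WithLp.equiv 2 (Fin n → ℂ)) this
    set q' : Fin n → ℂ := WithLp.equiv 2 (Fin n → ℂ) q with hq'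
    have hCq : C *ᵥ q' = 0 := by
      rw [← hmul, ← Matrix.mulVec_mulVec, hq0, Matrix.mulVec_zero]
    have hqp : (inner ℂ q p : ℂ) = 0 := (Submodule.mem_orthogonal K p).mp hp q hq
    have hqx : star q' ⬝ᵥ x = (‖q‖ : ℂ) ^ 2 := by
      have h5 : star q' ⬝ᵥ x = (inner ℂ (e q') (e x) : ℂ) :=
        (inner_piLp_equiv_symm' q' x).symm
      have h6 : e q' = q := Equiv.symm_apply_apply _ q
      rw [h5, h6, hxpq, inner_add_right, hqp, add_zero, inner_self_eq_norm_sq_to_K]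
      norm_cast
    have hxq : star x ⬝ᵥ q' = (‖q‖ : ℂ) ^ 2 := by
      have : star x ⬝ᵥ q' = star (star q' ⬝ᵥ x) := Matrix.star_dotProduct x q'
      rw [this, hqx]
      simp [← Complex.ofReal_pow]
    have hpos := hD.dotProduct_mulVec_nonneg q'
    rw [expand_quad, hCq, dotProduct_zero, hqx, hxq, zero_sub] at hpos
    have hq00 : q = 0 := by
      have h7 : (0:ℂ) ≤ ((-(α * ‖q‖ ^ 4) : ℝ) : ℂ) := by
        convert hpos using 1
        push_cast; ring
      have h8 : (0:ℝ) ≤ -(α * ‖q‖ ^ 4) := Complex.zero_le_real.mp h7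
      have : ‖q‖ = 0 := by
        by_contra hne
        have hpos' : 0 < ‖q‖ := lt_of_le_of_ne (norm_nonneg q) (Ne.symm hne)
        nlinarith [pow_pos hpos' 4]
      simpa using this
    have hex : e x = p := by rw [hxpq, hq00, zero_add]
    -- range of toEuclideanLin C equals Kᗮ
    have hrle : LinearMap.range (Matrix.toEuclideanLin C) ≤ Kᗮ := by
      rintro _ ⟨z, rfl⟩
      rw [Submodule.mem_orthogonal]
      intro u hu
      have hu0 : S *ᵥ (WithLp.equiv 2 (Fin n → ℂ) u) = 0 := by
        have := hu
        rw [LinearMap.mem_ker, hT, Matrix.toEuclideanLin_apply] at this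
        simpa using congrArg (WithLp.equiv 2 (Fin n → ℂ)) this
      have : (inner ℂ u (Matrix.toEuclideanLin C z) : ℂ)
          = star (WithLp.equiv 2 (Fin n → ℂ) u) ⬝ᵥ (C *ᵥ (WithLp.equiv 2 (Fin n → ℂ) z)) := by
        rw [Matrix.toEuclideanLin_apply]
        exact dotProduct_comm _ _
      rw [this, ← hmul, ← Matrix.mulVec_mulVec, herm_shift hSh, hu0]
      simp
    have hker : LinearMap.ker (Matrix.toEuclideanLin C) = K := by
      ext z
      rw [LinearMap.mem_ker, hK, LinearMap.mem_ker, hT]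
      constructor
      · intro hz
        have hz' : C *ᵥ (WithLp.equiv 2 (Fin n → ℂ) z) = 0 := by
          rw [Matrix.toEuclideanLin_apply] at hz
          simpa using congrArg (WithLp.equiv 2 (Fin n → ℂ)) hz
        have h9 : star (S *ᵥ (WithLp.equiv 2 (Fin n → ℂ) z))
            ⬝ᵥ (S *ᵥ (WithLp.equiv 2 (Fin n → ℂ) z)) = 0 := by
          rw [← herm_shift hSh, Matrix.mulVec_mulVec, hmul, hz', dotProduct_zero]
        have h10 := dotProduct_star_self_eq_zero.mp h9
        rw [Matrix.toEuclideanLin_apply, show z.ofLp = WithLp.equiv 2 (Fin n → ℂ) z from rfl, h10]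
        simp
      · intro hz
        have hz' : S *ᵥ (WithLp.equiv 2 (Fin n → ℂ) z) = 0 := by
          rw [Matrix.toEuclideanLin_apply] at hz
          simpa using congrArg (WithLp.equiv 2 (Fin n → ℂ)) hz
        rw [Matrix.toEuclideanLin_apply, show z.ofLp = WithLp.equiv 2 (Fin n → ℂ) z from rfl, ← hmul,
          ← Matrix.mulVec_mulVec, hz']
        simp
    have hfr : Module.finrank ℂ (LinearMap.range (Matrix.toEuclideanLin C))
        = Module.finrank ℂ Kᗮ := by
      have h1 := LinearMap.finrank_range_add_finrank_ker (Matrix.toEuclideanLin C)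
      have h2 := Submodule.finrank_add_finrank_orthogonal K
      rw [hker] at h1
      omega
    have heq : LinearMap.range (Matrix.toEuclideanLin C) = Kᗮ :=
      Submodule.eq_of_le_of_finrank_eq hrle hfr
    have hmem : e x ∈ LinearMap.range (Matrix.toEuclideanLin C) := by
      rw [heq, hex]; exact hp
    obtain ⟨z, hz⟩ := hmem
    refine ⟨WithLp.equiv 2 (Fin n → ℂ) z, ?_⟩
    rw [Matrix.toEuclideanLin_apply] at hz
    have := congrArg (WithLp.equiv 2 (Fin n → ℂ)) hz
    simpa [he] using this
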